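/- Let an index coding problem be given, let F be a field, L ≥ 1 an integer, and V_1,…,V_n ∈ F^L vectors assigned to the n messages; encode each message tuple w = (w_1,…,w_n) ∈ F^n as c(w) = Σ_{i=1}^n w_i V_i. Then every receiver can decode all of its demanded messages from the codeword and its side information — i.e., for every receiver j and all w, w' ∈ F^n with w_i = w'_i for all i ∈ S(j) and c(w) = c(w'), one has w_k = w'_k for every k ∈ D(j) — if and only if for every receiver j and every k ∈ D(j), V_k ∉ span{V_i : i ∈ Interf_k(j)}. -/

import Mathlib

/-!
Common definitions: an index coding problem with `n` messages (indexed by `Fin n`),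
`T ≥ 1` receivers, demand sets `D j` and side-information sets `S j`.
-/

/-- An index coding problem with `n` messages. -/
structure ICP (n : ℕ) where
  T : ℕ
  hT : 1 ≤ T
  D : Fin T → Finset (Fin n)
  S : Fin T → Finset (Fin n)
  hDS : ∀ j, Disjoint (D j) (S j)

namespace ICP

variable {n : ℕ}

/-- The interfering set `Interf_k(j)`: all messages other than `k` not in the side
information of receiver `j`, provided `k ∈ D j`; empty otherwise. -/
def Interf (P : ICP n) (k : Fin n) (j : Fin P.T) : Finset (Fin n) :=
  if k ∈ P.D j then Finset.univ \ insert k (P.S j) else ∅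

/-- All conflicts are resolved by the assignment `V` of `L`-length vectors over `F`
to the messages: for every message `k` and receiver `j`, `V k` is outside the span of
the vectors assigned to `Interf_k(j)`. -/
def Resolved (P : ICP n) (F : Type) [Field F] {L : ℕ} (V : Fin n → Fin L → F) : Prop :=
  ∀ (k : Fin n) (j : Fin P.T),
    V k ∉ Submodule.span F (V '' (P.Interf k j : Set (Fin n)))

/-- Rate `1/L` feasibility: there exist a finite field `F` and an assignment of
`L`-length vectors over `F` resolving all conflicts. -/
def RateFeasible (P : ICP n) (L : ℕ) : Prop :=
  ∃ (F : Type) (_ : Field F) (_ : Fintype F) (V : Fin n → Fin L → F),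
    P.Resolved F V

/-- Adjacency in the alignment graph: `i ≠ i'` both interfere at a receiver `j`
demanding some message `k ∉ {i, i'}`. -/
def AlignAdj (P : ICP n) (i i' : Fin n) : Prop :=
  i ≠ i' ∧ ∃ (j : Fin P.T) (k : Fin n), k ∈ P.D j ∧ k ≠ i ∧ k ≠ i' ∧
    i ∈ P.Interf k j ∧ i' ∈ P.Interf k j

/-- The alignment graph. -/
def alignGraph (P : ICP n) : SimpleGraph (Fin n) where
  Adj := P.AlignAdj
  symm := by
    refine ⟨?_⟩
    rintro a b ⟨hne, j, k, h1, h2, h3, h4, h5⟩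
    exact ⟨hne.symm, j, k, h1, h3, h2, h5, h4⟩
  loopless := by refine ⟨?_⟩; rintro a ⟨hne, -⟩; exact hne rfl

/-- Two messages lie in the same alignment set (connected component of the
alignment graph). -/
def SameAlignSet (P : ICP n) (i i' : Fin n) : Prop :=
  P.alignGraph.Reachable i i'

/-- Messages `i` and `k` are in conflict. -/
def InConflict (P : ICP n) (i k : Fin n) : Prop :=
  (∃ j, k ∈ P.D j ∧ i ∈ P.Interf k j) ∨ (∃ j, i ∈ P.D j ∧ k ∈ P.Interf i j)

/-- There is an internal conflict: a conflict between two messages lying in the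
same alignment set. -/
def HasInternalConflict (P : ICP n) : Prop :=
  ∃ i k, P.InConflict i k ∧ P.SameAlignSet i k

/-- The conflict hypergraph, given as the set of unordered pairs `{{k}, Interf_k(j)}`
over all receivers `j` and all demands `k ∈ D j`. -/
def conflictHypergraph (P : ICP n) : Set (Sym2 (Finset (Fin n))) :=
  {e | ∃ (j : Fin P.T) (k : Fin n), k ∈ P.D j ∧ e = s({k}, P.Interf k j)}

/-- The problem is groupcast: every message is demanded by at least one receiver. -/
def Groupcast (P : ICP n) : Prop := ∀ k : Fin n, ∃ j, k ∈ P.D j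

/-- `i 0, i 1, i 2, i 3` form an acyclic subset of messages of size 4. -/
def AcyclicSubset4 (P : ICP n) (i : Fin 4 → Fin n) : Prop :=
  Function.Injective i ∧
    ∃ j : Fin 4 → Fin P.T, ∀ m : Fin 4, i m ∈ P.D (j m) ∧
      ∀ m' : Fin 4, m' < m → i m' ∈ P.Interf (i m) (j m)

/-- The alignment set (connected component) of the vertex `v` has both a fork
(a vertex of degree at least 3) and a cycle all of whose vertices lie in it. -/
def HasForkAndCycle (P : ICP n) (v : Fin n) : Prop :=
  (∃ u, P.alignGraph.Reachable v u ∧ 3 ≤ (P.alignGraph.neighborSet u).ncard) ∧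
  (∃ (u : Fin n) (c : P.alignGraph.Walk u u), c.IsCycle ∧
      ∀ x ∈ c.support, P.alignGraph.Reachable v x)

/-- A triangular interfering set: a 3-element set of messages simultaneously
interfering at some receiver, at least two of which are in conflict. -/
def TriangularSet (P : ICP n) (W : Finset (Fin n)) : Prop :=
  W.card = 3 ∧ (∃ (j : Fin P.T) (k : Fin n), k ∈ P.D j ∧ W ⊆ P.Interf k j) ∧
    ∃ i i', i ∈ W ∧ i' ∈ W ∧ i ≠ i' ∧ P.InConflict i i'

/-- Two distinct triangular interfering sets are adjacent: they meet in exactly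
two messages which are in conflict. -/
def TriAdj (P : ICP n) (W1 W2 : Finset (Fin n)) : Prop :=
  P.TriangularSet W1 ∧ P.TriangularSet W2 ∧ W1 ≠ W2 ∧
    ∃ i i', i ≠ i' ∧ W1 ∩ W2 = {i, i'} ∧ P.InConflict i i'

/-- Two triangular interfering sets are connected: some finite sequence of
triangular interfering sets, with consecutive members adjacent, joins them. -/
def TriConnected (P : ICP n) (W1 W2 : Finset (Fin n)) : Prop :=
  P.TriangularSet W1 ∧ P.TriangularSet W2 ∧ Relation.ReflTransGen P.TriAdj W1 W2

/-- `W'` is a type-2 alignment set: the union of a maximal family of pairwise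
connected triangular interfering sets. -/
def IsType2AlignSet (P : ICP n) (W' : Finset (Fin n)) : Prop :=
  ∃ 𝒯 : Set (Finset (Fin n)), 𝒯.Nonempty ∧
    (∀ W ∈ 𝒯, P.TriangularSet W) ∧
    (∀ W1 ∈ 𝒯, ∀ W2 ∈ 𝒯, P.TriConnected W1 W2) ∧
    (∀ 𝒯' : Set (Finset (Fin n)), 𝒯 ⊆ 𝒯' → (∀ W ∈ 𝒯', P.TriangularSet W) →
      (∀ W1 ∈ 𝒯', ∀ W2 ∈ 𝒯', P.TriConnected W1 W2) → 𝒯' = 𝒯) ∧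
    (W' : Set (Fin n)) = ⋃ W ∈ 𝒯, (W : Set (Fin n))

/-- The interfering set of message `k` at receiver `j` in the `W'`-restricted
index coding problem (its demand sets are `D j ∩ W'`, side information `S j ∩ W'`,
and message set `W'`). -/
def rInterf (P : ICP n) (W' : Finset (Fin n)) (k : Fin n) (j : Fin P.T) :
    Finset (Fin n) :=
  if k ∈ P.D j ∩ W' then P.Interf k j ∩ W' else ∅

/-- Adjacency in the alignment graph of the `W'`-restricted problem. -/
def rAlignAdj (P : ICP n) (W' : Finset (Fin n)) (i i' : Fin n) : Prop :=
  i ≠ i' ∧ ∃ (j : Fin P.T) (k : Fin n), k ∈ P.D j ∩ W' ∧ k ≠ i ∧ k ≠ i' ∧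
    i ∈ P.rInterf W' k j ∧ i' ∈ P.rInterf W' k j

/-- The alignment graph of the `W'`-restricted problem (messages outside `W'`
are isolated vertices). -/
def rAlignGraph (P : ICP n) (W' : Finset (Fin n)) : SimpleGraph (Fin n) where
  Adj := P.rAlignAdj W'
  symm := by
    refine ⟨?_⟩
    rintro a b ⟨hne, j, k, h1, h2, h3, h4, h5⟩
    exact ⟨hne.symm, j, k, h1, h3, h2, h5, h4⟩
  loopless := by refine ⟨?_⟩; rintro a ⟨hne, -⟩; exact hne rfl

/-- Conflict in the `W'`-restricted problem. -/
def rInConflict (P : ICP n) (W' : Finset (Fin n)) (i k : Fin n) : Prop :=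
  (∃ j, k ∈ P.D j ∩ W' ∧ i ∈ P.rInterf W' k j) ∨
  (∃ j, i ∈ P.D j ∩ W' ∧ k ∈ P.rInterf W' i j)

/-- There is a `W'`-restricted internal conflict: a conflict of the restricted
problem between two messages in the same `W'`-restricted alignment set. -/
def HasRestrictedInternalConflict (P : ICP n) (W' : Finset (Fin n)) : Prop :=
  ∃ i k, i ∈ W' ∧ k ∈ W' ∧ P.rInConflict W' i k ∧ (P.rAlignGraph W').Reachable i k

/-- The `W'`-restricted index coding problem is rate `1/2` feasible: there exist a
finite field `F` and vectors `V i ∈ F²` for `i ∈ W'` such that for every `k ∈ W'`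
and every receiver `j`, `V k ∉ span {V i : i ∈ Interf_k(j) ∩ W'}`. -/
def RestrictedRateHalfFeasible (P : ICP n) (W' : Finset (Fin n)) : Prop :=
  ∃ (F : Type) (_ : Field F) (_ : Fintype F) (V : Fin n → Fin 2 → F),
    ∀ k ∈ W', ∀ j : Fin P.T,
      V k ∉ Submodule.span F (V '' ((P.Interf k j ∩ W') : Set (Fin n)))

end ICP

/-- With messages encoded as `c(w) = ∑ i, w i • V i`, every receiver
can decode all of its demanded messages from the codeword and its side information
iff for every receiver `j` and every `k ∈ D j`, `V k ∉ span {V i : i ∈ Interf_k(j)}`. -/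
theorem decoding_iff_no_conflict {n : ℕ} (P : ICP n) (F : Type) [Field F]
    (L : ℕ) (hL : 1 ≤ L) (V : Fin n → Fin L → F) :
    (∀ (j : Fin P.T) (w w' : Fin n → F),
        (∀ i ∈ P.S j, w i = w' i) →
        (∑ i, w i • V i) = (∑ i, w' i • V i) →
        ∀ k ∈ P.D j, w k = w' k) ↔
      (∀ (j : Fin P.T), ∀ k ∈ P.D j,
        V k ∉ Submodule.span F (V '' (P.Interf k j : Set (Fin n)))) := by
  constructor
  · intro hdec j k hk hmem
    rw [Finsupp.mem_span_image_iff_linearCombination] at hmem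
    obtain ⟨l, hl, hlV⟩ := hmem
    -- define w
    set w : Fin n → F := fun i => if i = k then 1 else -(l i) with hw
    have hS : ∀ i ∈ P.S j, w i = (0 : Fin n → F) i := by
      intro i hi
      have hik : i ≠ k := by
        intro h; subst h
        exact (P.hDS j).forall_ne_finset hk hi rfl
      have hiI : i ∉ P.Interf k j := by
        simp [ICP.Interf, hk, Finset.mem_insert, hi]
      have : l i = 0 := by
        by_contra h
        exact hiI (hl (Finsupp.mem_support_iff.mpr h))
      simp [hw, hik, this]
    have hsum : (∑ i, w i • V i) = ∑ i, (0 : Fin n → F) i • V i := by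
      simp only [Pi.zero_apply, zero_smul, Finset.sum_const_zero]
      have hkI : k ∉ P.Interf k j := by
        simp [ICP.Interf, hk]
      have hsupp : l.support ⊆ Finset.univ \ {k} := by
        intro i hi
        have := hl hi
        simp only [Finset.mem_sdiff, Finset.mem_univ, Finset.mem_singleton, true_and]
        intro h; subst h; exact hkI this
      have h1 : (∑ i, w i • V i) = V k + ∑ i ∈ Finset.univ \ {k}, (-(l i)) • V i := by
        rw [← Finset.sum_sdiff (Finset.subset_univ {k})]
        rw [Finset.sum_singleton]
        rw [add_comm]
        congr 1
        · simp [hw]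
        · apply Finset.sum_congr rfl
          intro i hi
          have : i ≠ k := by simpa [Finset.mem_sdiff] using hi
          simp [hw, this]
      rw [h1]
      have h2 : ∑ i ∈ Finset.univ \ {k}, (-(l i)) • V i = -(V k) := by
        have : ∑ i ∈ Finset.univ \ {k}, l i • V i = V k := by
          rw [← hlV, Finsupp.linearCombination_apply, Finsupp.sum]
          rw [Finset.sum_subset hsupp]
          intro i _ hi
          simp [Finsupp.notMem_support_iff.mp hi]
        calc ∑ i ∈ Finset.univ \ {k}, (-(l i)) • V i
            = -∑ i ∈ Finset.univ \ {k}, l i • V i := by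
              rw [← Finset.sum_neg_distrib]; simp
          _ = -(V k) := by rw [this]
      rw [h2, add_neg_cancel]
    have := hdec j w 0 hS hsum k hk
    simp [hw] at this
  · intro hres j w w' hSeq hceq k hk
    by_contra hne
    set d : Fin n → F := fun i => w i - w' i with hd
    have hdk : d k ≠ 0 := sub_ne_zero.mpr hne
    have hdsum : ∑ i, d i • V i = 0 := by
      simp only [hd, sub_smul, Finset.sum_sub_distrib, hceq, sub_self]
    have hdS : ∀ i ∈ P.S j, d i = 0 := fun i hi => sub_eq_zero.mpr (hSeq i hi)
    -- restrict the sum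
    have hsub : insert k (P.Interf k j) ⊆ Finset.univ := Finset.subset_univ _
    have hrest : ∑ i ∈ insert k (P.Interf k j), d i • V i = 0 := by
      rw [← hdsum]
      apply Finset.sum_subset hsub
      intro i _ hi
      have hiS : i ∈ P.S j := by
        by_contra hiS
        apply hi
        by_cases hik : i = k
        · simp [hik]
        · simp [Finset.mem_insert, hik, ICP.Interf, hk, hiS]
      rw [hdS i hiS, zero_smul]
    have hkI : k ∉ P.Interf k j := by simp [ICP.Interf, hk]
    rw [Finset.sum_insert hkI] at hrest
    have hVk : V k = ∑ i ∈ P.Interf k j, ((d k)⁻¹ * (-(d i))) • V i := by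
      have h1 : d k • V k = ∑ i ∈ P.Interf k j, (-(d i)) • V i := by
        rw [eq_neg_of_add_eq_zero_left hrest, ← Finset.sum_neg_distrib]
        exact Finset.sum_congr rfl fun i _ => (neg_smul _ _).symm
      calc V k = (d k)⁻¹ • (d k • V k) := by rw [smul_smul, inv_mul_cancel₀ hdk, one_smul]
        _ = (d k)⁻¹ • ∑ i ∈ P.Interf k j, (-(d i)) • V i := by rw [h1]
        _ = ∑ i ∈ P.Interf k j, ((d k)⁻¹ * (-(d i))) • V i := by
            rw [Finset.smul_sum]; simp [smul_smul]
    apply hres j k hk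
    rw [hVk]
    apply Submodule.sum_mem
    intro i hi
    exact Submodule.smul_mem _ _ (Submodule.subset_span ⟨i, by simpa using hi, rfl⟩)
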